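/- Let G be a graph, D ⊆ V(G) with |D| = t+2 inducing a clique, and suppose every r-clique A of G satisfies |A ∩ D| ≥ t+1. For each (t+1)-subset Tᵢ of D let Nⁱ be the set of common neighbors of Tᵢ outside D, and let N⁰ be the set of common neighbors of all of D outside D. Then N(K_r, G) ≤ N(K_{r-t-2}, G[N⁰]) + Σᵢ N(K_{r-t-1}, G[Nⁱ]), where the sum is over all t+2 many (t+1)-subsets Tᵢ of D. -/

import Mathlib

open Finset SimpleGraph

private lemma ncard_setOf_finset_eq {V : Type*} [Fintype V] [DecidableEq V]
    (P : Finset V → Prop) [DecidablePred P] :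
    {A : Finset V | P A}.ncard = (Finset.univ.filter P).card := by
  have : {A : Finset V | P A} = ↑(Finset.univ.filter P) := by ext A; simp
  rw [this, Set.ncard_coe_finset]

/-- The decomposition bound: if `D` is a `(t+2)`-set inducing a clique and every
`r`-clique `A` of `G` satisfies `|A ∩ D| ≥ t+1`, then the number of `r`-cliques of `G` is
at most the number of `(r-t-2)`-cliques inside the common neighborhood `N⁰` of `D` plus
the sum over the `(t+1)`-subsets `T` of `D` of the number of `(r-t-1)`-cliques inside the
common neighborhood `N^T` of `T` (both neighborhoods taken outside `D`). -/
theorem clique_decomposition_bound {V : Type*} [Fintype V] [DecidableEq V]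
    (G : SimpleGraph V) (r t : ℕ)
    (D : Finset V) (hD : D.card = t + 2) (hDclique : G.IsClique ↑D)
    (hA : ∀ A : Finset V, G.IsNClique r A → t + 1 ≤ (A ∩ D).card) :
    {A : Finset V | G.IsNClique r A}.ncard ≤
      {A : Finset V | G.IsNClique (r - t - 2) A ∧
        ∀ v ∈ A, v ∉ D ∧ ∀ u ∈ D, G.Adj u v}.ncard +
      ∑ T ∈ D.powersetCard (t + 1),
        {A : Finset V | G.IsNClique (r - t - 1) A ∧
          ∀ v ∈ A, v ∉ D ∧ ∀ u ∈ T, G.Adj u v}.ncard := by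
  classical
  rw [ncard_setOf_finset_eq, ncard_setOf_finset_eq]
  rw [Finset.sum_congr rfl (fun T _ => ncard_setOf_finset_eq
    (fun A => G.IsNClique (r - t - 1) A ∧ ∀ v ∈ A, v ∉ D ∧ ∀ u ∈ T, G.Adj u v))]
  set S : Finset (Finset V) := Finset.univ.filter (fun A => G.IsNClique r A) with hSdef
  -- Partition S
  have hsub : S ⊆ S.filter (fun A => D ⊆ A) ∪
      (D.powersetCard (t + 1)).biUnion
        (fun T => S.filter (fun A => A ∩ D = T)) := by
    intro A hAS
    have hAcl : G.IsNClique r A := by simpa [hSdef] using hAS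
    have h1 : t + 1 ≤ (A ∩ D).card := hA A hAcl
    have h2 : (A ∩ D).card ≤ t + 2 := hD ▸ Finset.card_le_card (Finset.inter_subset_right)
    rcases eq_or_lt_of_le h1 with heq | hlt
    · refine Finset.mem_union_right _ (Finset.mem_biUnion.mpr ⟨A ∩ D, ?_, ?_⟩)
      · exact Finset.mem_powersetCard.mpr ⟨Finset.inter_subset_right, heq.symm⟩
      · simp [hAS]
    · have : A ∩ D = D := Finset.eq_of_subset_of_card_le Finset.inter_subset_right
        (by omega)
      refine Finset.mem_union_left _ (Finset.mem_filter.mpr ⟨hAS, ?_⟩)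
      intro x hx; rw [← this] at hx; exact (Finset.mem_inter.mp hx).1
  calc S.card ≤ (S.filter (fun A => D ⊆ A)).card +
        ((D.powersetCard (t + 1)).biUnion
          (fun T => S.filter (fun A => A ∩ D = T))).card :=
        le_trans (Finset.card_le_card hsub) (Finset.card_union_le _ _)
    _ ≤ (S.filter (fun A => D ⊆ A)).card +
        ∑ T ∈ D.powersetCard (t + 1), (S.filter (fun A => A ∩ D = T)).card :=
        Nat.add_le_add_left (Finset.card_biUnion_le) _
    _ ≤ _ := by
        refine Nat.add_le_add ?_ (Finset.sum_le_sum ?_)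
        · -- D ⊆ A case: inject via A ↦ A \ D
          apply Finset.card_le_card_of_injOn (fun A => A \ D)
          · intro A hAmem
            obtain ⟨hAS, hDA⟩ := Finset.mem_filter.mp hAmem
            have hAcl : G.IsNClique r A := by simpa [hSdef] using hAS
            refine Finset.mem_filter.mpr ⟨Finset.mem_univ _, ?_, ?_⟩
            · constructor
              · exact hAcl.1.subset (by
                  intro x hx
                  exact (Finset.mem_sdiff.mp hx).1)
              · show (A \ D).card = _
                rw [Finset.card_sdiff_of_subset hDA, hAcl.2, hD]
                omega
            · intro v hv
              obtain ⟨hvA, hvD⟩ := Finset.mem_sdiff.mp hv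
              refine ⟨hvD, fun u hu => ?_⟩
              exact hAcl.1 (hDA hu) hvA (fun h => hvD (h ▸ hu))
          · intro A hAmem B hBmem hAB
            obtain ⟨_, hDA⟩ := Finset.mem_filter.mp hAmem
            obtain ⟨_, hDB⟩ := Finset.mem_filter.mp hBmem
            dsimp only at hAB
            have : A \ D ∪ D = B \ D ∪ D := by rw [hAB]
            rwa [Finset.sdiff_union_of_subset hDA,
              Finset.sdiff_union_of_subset hDB] at this
        · -- A ∩ D = T case
          intro T hT
          obtain ⟨hTD, hTcard⟩ := Finset.mem_powersetCard.mp hT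
          apply Finset.card_le_card_of_injOn (fun A => A \ D)
          · intro A hAmem
            obtain ⟨hAS, hAD⟩ := Finset.mem_filter.mp hAmem
            have hAcl : G.IsNClique r A := by simpa [hSdef] using hAS
            have hTA : T ⊆ A := by
              intro x hx; exact (Finset.mem_inter.mp (hAD ▸ hx)).1
            have hsd : A \ D = A \ T := by
              ext x
              simp only [Finset.mem_sdiff]
              constructor
              · rintro ⟨hxA, hxD⟩; exact ⟨hxA, fun h => hxD (hTD h)⟩
              · rintro ⟨hxA, hxT⟩
                refine ⟨hxA, fun hxD => hxT ?_⟩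
                rw [← hAD]; exact Finset.mem_inter.mpr ⟨hxA, hxD⟩
            refine Finset.mem_filter.mpr ⟨Finset.mem_univ _, ?_, ?_⟩
            · constructor
              · exact hAcl.1.subset (by
                  intro x hx
                  exact (Finset.mem_sdiff.mp hx).1)
              · show (A \ D).card = _
                rw [hsd, Finset.card_sdiff_of_subset hTA, hAcl.2, hTcard]
                omega
            · intro v hv
              obtain ⟨hvA, hvD⟩ := Finset.mem_sdiff.mp hv
              refine ⟨hvD, fun u hu => ?_⟩
              exact hAcl.1 (hTA hu) hvA (fun h => hvD (h ▸ hTD hu))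
          · intro A hAmem B hBmem hAB
            obtain ⟨_, hAD⟩ := Finset.mem_filter.mp hAmem
            obtain ⟨_, hBD⟩ := Finset.mem_filter.mp hBmem
            have hTA : T ⊆ A := by
              intro x hx; exact (Finset.mem_inter.mp (hAD ▸ hx)).1
            have hTB : T ⊆ B := by
              intro x hx; exact (Finset.mem_inter.mp (hBD ▸ hx)).1
            have hsdA : A \ D = A \ T := by
              ext x
              simp only [Finset.mem_sdiff]
              constructor
              · rintro ⟨hxA, hxD⟩; exact ⟨hxA, fun h => hxD (hTD h)⟩
              · rintro ⟨hxA, hxT⟩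
                refine ⟨hxA, fun hxD => hxT ?_⟩
                rw [← hAD]; exact Finset.mem_inter.mpr ⟨hxA, hxD⟩
            have hsdB : B \ D = B \ T := by
              ext x
              simp only [Finset.mem_sdiff]
              constructor
              · rintro ⟨hxB, hxD⟩; exact ⟨hxB, fun h => hxD (hTD h)⟩
              · rintro ⟨hxB, hxT⟩
                refine ⟨hxB, fun hxD => hxT ?_⟩
                rw [← hBD]; exact Finset.mem_inter.mpr ⟨hxB, hxD⟩
            dsimp only at hAB
            have : A \ T ∪ T = B \ T ∪ T := by
              rw [← hsdA, ← hsdB, hAB]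
            rwa [Finset.sdiff_union_of_subset hTA,
              Finset.sdiff_union_of_subset hTB] at this
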